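/- arXiv:chao-dyn/9802014 — 5 statements merged into one kernel-verified Lean document; each statement's English description precedes it below -/
import Mathlib

section
/- The inequality γ < 2·√(1 − γ·(γ + √(γ²+4))/2) holds for a positive real γ if and only if γ² < 4(1 − 2/√5); equivalently, the critical value γ∞ satisfying γ∞ = 2α∞ is γ∞ = 2√(1 − 2/√5). -/
private lemma lt_two_sqrt_iff (γ x : ℝ) (hγ : 0 ≤ γ) :
    γ < 2 * Real.sqrt x ↔ γ ^ 2 < 4 * x := by
  have h : γ < 2 * Real.sqrt x ↔ γ / 2 < Real.sqrt x := by
    constructor <;> intro h <;> linarith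
  rw [h, Real.lt_sqrt (by positivity)]
  constructor <;> intro h <;> nlinarith

/-- For `γ > 0`, the inequality `γ < 2√(1 − γ(γ + √(γ²+4))/2)` holds iff
`γ² < 4(1 − 2/√5)`; hence the critical value `γ∞` with `γ∞ = 2α∞(γ∞)` is
`γ∞ = 2√(1 − 2/√5)`. -/
theorem contraction_bound_iff (γ : ℝ) (hγ : 0 < γ) :
    (γ < 2 * Real.sqrt (1 - γ * ((γ + Real.sqrt (γ ^ 2 + 4)) / 2)) ↔
      γ ^ 2 < 4 * (1 - 2 / Real.sqrt 5)) ∧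
    (2 * Real.sqrt (1 - 2 / Real.sqrt 5)) =
      2 * Real.sqrt (1 - (2 * Real.sqrt (1 - 2 / Real.sqrt 5)) *
        ((2 * Real.sqrt (1 - 2 / Real.sqrt 5) +
          Real.sqrt ((2 * Real.sqrt (1 - 2 / Real.sqrt 5)) ^ 2 + 4)) / 2)) := by
  have hs5pos : (0:ℝ) < Real.sqrt 5 := Real.sqrt_pos.mpr (by norm_num)
  have hs5 : (Real.sqrt 5) ^ 2 = 5 := Real.sq_sqrt (by norm_num)
  have hs5lt : Real.sqrt 5 < 3 := by nlinarith
  have hs5gt : 2 < Real.sqrt 5 := by nlinarith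
  set u := Real.sqrt 5 with hu
  have hinv : 2 / u = 2 * u / 5 := by
    rw [div_eq_div_iff hs5pos.ne' (by norm_num : (5:ℝ) ≠ 0)]
    linear_combination (-2) * hs5
  rw [hinv]
  have hs5lt' : u < 2.5 := by nlinarith
  have hcpos : (0:ℝ) < 1 - 2 * u / 5 := by linarith
  constructor
  · -- the iff
    have hs : Real.sqrt (γ ^ 2 + 4) ≥ 0 := Real.sqrt_nonneg _
    have hs2 : (Real.sqrt (γ ^ 2 + 4)) ^ 2 = γ ^ 2 + 4 :=
      Real.sq_sqrt (by positivity)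
    set s := Real.sqrt (γ ^ 2 + 4) with hsdef
    rw [lt_two_sqrt_iff _ _ hγ.le,
      show 4 * (1 - γ * ((γ + s) / 2)) = 4 - 2 * γ ^ 2 - 2 * γ * s by ring]
    have hγs : 0 ≤ 2 * γ * s := by positivity
    constructor
    · intro h
      have h1 : 2 * γ * s < 4 - 3 * γ ^ 2 := by linarith
      have h2 : (2 * γ * s) * (2 * γ * s) < (4 - 3 * γ ^ 2) * (4 - 3 * γ ^ 2) :=
        mul_self_lt_mul_self hγs h1
      have h2' : (2 * γ * s) * (2 * γ * s) = 4 * γ ^ 2 * (γ ^ 2 + 4) := by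
        linear_combination (4 * γ ^ 2) * hs2
      have h5 : 5 * γ ^ 4 - 40 * γ ^ 2 + 16 > 0 := by nlinarith
      have h4 : γ ^ 2 < 4 := by nlinarith
      have hf5 : 5 * ((γ ^ 2 - (4 - 8 * u / 5)) * (γ ^ 2 - (4 + 8 * u / 5)))
          = 5 * γ ^ 4 - 40 * γ ^ 2 + 16 := by linear_combination (-64/5) * hs5
      have hf : (γ ^ 2 - (4 - 8 * u / 5)) * (γ ^ 2 - (4 + 8 * u / 5)) > 0 := by
        linarith
      have hneg : γ ^ 2 - (4 + 8 * u / 5) < 0 := by linarith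
      rcases mul_pos_iff.mp hf with ⟨h₁, h₂⟩ | ⟨h₁, h₂⟩
      · linarith
      · linarith
    · intro h
      have h4 : 3 * γ ^ 2 < 4 := by linarith
      have hf : (γ ^ 2 - (4 - 8 * u / 5)) * (γ ^ 2 - (4 + 8 * u / 5)) > 0 := by
        apply mul_pos_of_neg_of_neg <;> nlinarith [sq_nonneg γ]
      have hf5 : 5 * ((γ ^ 2 - (4 - 8 * u / 5)) * (γ ^ 2 - (4 + 8 * u / 5)))
          = 5 * γ ^ 4 - 40 * γ ^ 2 + 16 := by linear_combination (-64/5) * hs5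
      have h5 : 5 * γ ^ 4 - 40 * γ ^ 2 + 16 > 0 := by linarith
      have h1 : 2 * γ * s < 4 - 3 * γ ^ 2 := by
        by_contra hcon
        push_neg at hcon
        have hle : (4 - 3 * γ ^ 2) ^ 2 ≤ (2 * γ * s) ^ 2 :=
          pow_le_pow_left₀ (by linarith) hcon 2
        have h2' : (2 * γ * s) ^ 2 = 4 * γ ^ 2 * (γ ^ 2 + 4) := by
          linear_combination (4 * γ ^ 2) * hs2
        nlinarith
      linarith
  · -- the fixed point equality
    set c := 1 - 2 * u / 5 with hcdef
    have ha2 : (Real.sqrt c) ^ 2 = c := Real.sq_sqrt hcpos.le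
    have hanneg : 0 ≤ Real.sqrt c := Real.sqrt_nonneg _
    set a := Real.sqrt c with hadef
    congr 1
    have h44 : (2 * a) ^ 2 + 4 = 4 * (c + 1) := by linear_combination 4 * ha2
    have hb2 : (Real.sqrt (c + 1)) ^ 2 = c + 1 := Real.sq_sqrt (by linarith)
    have hbn : 0 ≤ Real.sqrt (c + 1) := Real.sqrt_nonneg _
    set b := Real.sqrt (c + 1) with hbdef
    have hsq : Real.sqrt ((2 * a) ^ 2 + 4) = 2 * b := by
      rw [h44, show 4 * (c + 1) = (2 * b) ^ 2 by linear_combination (-4) * hb2]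
      exact Real.sqrt_sq (by linarith)
    rw [hsq]
    -- goal : a = √(1 - 2a((2a+2b)/2))
    have h13 : 0 < 1 - 3 * c := by simp only [hcdef]; linarith
    have hc5 : 5 * c ^ 2 - 10 * c + 1 = 0 := by
      simp only [hcdef]; linear_combination (4/5) * hs5
    have hsq2 : (2 * a * b) ^ 2 = (1 - 3 * c) ^ 2 := by
      linear_combination (4 * b ^ 2) * ha2 + (4 * c) * hb2 - hc5
    have h2ab : 0 ≤ 2 * a * b := by positivity
    have hkey : 2 * a * b = 1 - 3 * c :=
      calc 2 * a * b = Real.sqrt ((2 * a * b) ^ 2) := (Real.sqrt_sq h2ab).symm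
        _ = Real.sqrt ((1 - 3 * c) ^ 2) := by rw [hsq2]
        _ = 1 - 3 * c := Real.sqrt_sq h13.le
    rw [show 1 - 2 * a * ((2 * a + 2 * b) / 2) = c by
      linear_combination (-2) * ha2 - hkey]
end

section
/- For every symbol sequence s : ℤ → {−1,1} and real parameters ε, b with |ε|(1+|b|) < 2√(1 − 2/√5), there exists a unique bounded sequence z : ℤ → ℝ with ‖z − s‖∞ ≤ M∞ := 1 − √(1 − γ(γ+√(γ²+4))/2) (where γ = |ε|(1+|b|)) satisfying the Hénon difference equation −ε(z_{t+1} + b z_{t−1}) + z_t² − 1 = 0 for all t ∈ ℤ, and moreover sign(z_t) = s_t for all t. -/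
open scoped BoundedContinuousFunction

lemma henon_eps_bound (ε b c u v : ℝ) (hu : |u| ≤ c) (hv : |v| ≤ c) :
    |ε * (u + b * v)| ≤ |ε| * (1 + |b|) * c := by
  have hc : 0 ≤ c := le_trans (abs_nonneg u) hu
  rw [abs_mul]
  calc |ε| * |u + b * v| ≤ |ε| * (|u| + |b| * |v|) := by
        apply mul_le_mul_of_nonneg_left _ (abs_nonneg ε)
        calc |u + b * v| ≤ |u| + |b * v| := abs_add_le _ _
          _ = |u| + |b| * |v| := by rw [abs_mul]
    _ ≤ |ε| * (1 * c + |b| * c) := by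
        apply mul_le_mul_of_nonneg_left _ (abs_nonneg ε)
        have := mul_le_mul_of_nonneg_left hv (abs_nonneg b)
        linarith
    _ = |ε| * (1 + |b|) * c := by ring

lemma henon_aux_p_lt (γ : ℝ) (hγ0 : 0 ≤ γ)
    (hγ : γ < 2 * Real.sqrt (1 - 2 / Real.sqrt 5)) :
    γ * ((γ + Real.sqrt (γ ^ 2 + 4)) / 2) < 2 / Real.sqrt 5 := by
  set r := Real.sqrt 5 with hr
  have hr0 : (0:ℝ) < r := Real.sqrt_pos.mpr (by norm_num)
  have hr2 : (2:ℝ) < r := by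
    rw [hr]
    have : (2:ℝ) = Real.sqrt 4 := by
      rw [show (4:ℝ) = 2^2 by norm_num, Real.sqrt_sq (by norm_num)]
    rw [this]
    exact Real.sqrt_lt_sqrt (by norm_num) (by norm_num)
  have hr5 : r ^ 2 = 5 := Real.sq_sqrt (by norm_num)
  set q := Real.sqrt (1 - 2 / r) with hq
  have hq0 : 0 ≤ q := Real.sqrt_nonneg _
  have hqarg : 0 ≤ 1 - 2 / r := by
    rw [sub_nonneg, div_le_one hr0]; linarith
  have hq2 : q ^ 2 * r = r - 2 := by
    rw [hq, Real.sq_sqrt hqarg]; field_simp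
  have hγ2r : γ ^ 2 * r < 4 * r - 8 := by nlinarith [sq_nonneg (γ - 2*q)]
  set d := Real.sqrt (γ ^ 2 + 4) with hd
  have hd0 : 0 ≤ d := Real.sqrt_nonneg _
  have hd2 : d ^ 2 = γ ^ 2 + 4 := Real.sq_sqrt (by positivity)
  set β := (γ + d) / 2 with hβ
  have hβ1 : 1 ≤ β := by
    have : 2 ≤ d := by
      rw [hd, show (2:ℝ) = Real.sqrt 4 by
        rw [show (4:ℝ) = 2^2 by norm_num, Real.sqrt_sq (by norm_num)]]
      exact Real.sqrt_le_sqrt (by nlinarith)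
    rw [hβ]; linarith
  have hβsq : β ^ 2 = 1 + γ * β := by rw [hβ]; nlinarith
  set p := γ * β with hp
  have hp0 : 0 ≤ p := mul_nonneg hγ0 (by linarith)
  have hpsq : p ^ 2 = γ ^ 2 * (1 + p) := by rw [hp]; nlinarith
  have key : r * p ^ 2 < (4 * r - 8) * (1 + p) := by
    have h1 : r * p ^ 2 = (γ ^ 2 * r) * (1 + p) := by rw [hpsq]; ring
    rw [h1]
    exact mul_lt_mul_of_pos_right hγ2r (by linarith)
  have hfac : (r * p - 2) * (p + 2 * r - 4) < 0 := by
    have hexp : (r * p - 2) * (p + 2 * r - 4)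
        = r * p ^ 2 - (4 * r - 8) * (1 + p) + 2 * (r ^ 2 - 5) * p := by ring
    rw [hexp, hr5]
    linarith [key]
  have h4 : 0 < p + 2 * r - 4 := by linarith
  have hrp : r * p < 2 := by
    by_contra hcon
    push_neg at hcon
    have := mul_nonneg (by linarith : (0:ℝ) ≤ r * p - 2) h4.le
    linarith
  rw [lt_div_iff₀ hr0, mul_comm]
  exact hrp

lemma henon_unique_aux (s : ℤ → ℝ) (hs : ∀ t, s t = 1 ∨ s t = -1) (ε b M : ℝ)
    (hM1 : M < 1) (hcontr : |ε| * (1 + |b|) < 2 * (1 - M))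
    (z w : ℤ → ℝ) (hz : ∀ t, |z t - s t| ≤ M) (hw : ∀ t, |w t - s t| ≤ M)
    (hez : ∀ t : ℤ, -ε * (z (t + 1) + b * z (t - 1)) + (z t) ^ 2 - 1 = 0)
    (hew : ∀ t : ℤ, -ε * (w (t + 1) + b * w (t - 1)) + (w t) ^ 2 - 1 = 0) :
    z = w := by
  set γ := |ε| * (1 + |b|) with hγdef
  have hγ0 : 0 ≤ γ := by positivity
  have hM0 : 0 ≤ M := le_trans (abs_nonneg _) (hz 0)
  have hbdd : BddAbove (Set.range fun t => |z t - w t|) := by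
    refine ⟨2 * M, ?_⟩
    rintro x ⟨t, rfl⟩
    calc |z t - w t| = |(z t - s t) - (w t - s t)| := by ring_nf
      _ ≤ |z t - s t| + |w t - s t| := abs_sub _ _
      _ ≤ 2 * M := by linarith [hz t, hw t]
  set D := ⨆ t, |z t - w t| with hD
  have hDub : ∀ t, |z t - w t| ≤ D := fun t => le_ciSup hbdd t
  have hD0 : 0 ≤ D := le_trans (abs_nonneg _) (hDub 0)
  have hsum : ∀ t, 2 * (1 - M) ≤ |z t + w t| := by
    intro t
    rcases hs t with h | h
    · have h1 := (abs_le.mp (hz t)).1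
      have h2 := (abs_le.mp (hw t)).1
      rw [h] at h1 h2
      calc 2 * (1 - M) ≤ z t + w t := by linarith
        _ ≤ |z t + w t| := le_abs_self _
    · have h1 := (abs_le.mp (hz t)).2
      have h2 := (abs_le.mp (hw t)).2
      rw [h] at h1 h2
      calc 2 * (1 - M) ≤ -(z t + w t) := by linarith
        _ ≤ |z t + w t| := neg_le_abs _
  have hkey : ∀ t, 2 * (1 - M) * |z t - w t| ≤ γ * D := by
    intro t
    have hdf : (z t) ^ 2 - (w t) ^ 2
        = ε * ((z (t + 1) - w (t + 1)) + b * (z (t - 1) - w (t - 1))) := by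
      linear_combination hez t - hew t
    calc 2 * (1 - M) * |z t - w t| ≤ |z t + w t| * |z t - w t| :=
          mul_le_mul_of_nonneg_right (hsum t) (abs_nonneg _)
      _ = |(z t) ^ 2 - (w t) ^ 2| := by rw [← abs_mul]; ring_nf
      _ = |ε * ((z (t + 1) - w (t + 1)) + b * (z (t - 1) - w (t - 1)))| := by rw [hdf]
      _ ≤ |ε| * (1 + |b|) * D := henon_eps_bound ε b D _ _ (hDub _) (hDub _)
      _ = γ * D := by rw [hγdef]
  have hDle : 2 * (1 - M) * D ≤ γ * D := by
    have h2M : 0 < 2 * (1 - M) := by linarith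
    have : D ≤ γ * D / (2 * (1 - M)) := by
      apply ciSup_le
      intro t
      rw [le_div_iff₀ h2M]
      calc |z t - w t| * (2 * (1 - M)) = 2 * (1 - M) * |z t - w t| := by ring
        _ ≤ γ * D := hkey t
    calc 2 * (1 - M) * D ≤ 2 * (1 - M) * (γ * D / (2 * (1 - M))) :=
          mul_le_mul_of_nonneg_left this h2M.le
      _ = γ * D := by field_simp [(by linarith : (0:ℝ) < 1 - M).ne']
  have hDz : D ≤ 0 := by nlinarith
  funext t
  have h1 : |z t - w t| ≤ 0 := le_trans (hDub t) hDz
  have h2 : |z t - w t| = 0 := le_antisymm h1 (abs_nonneg _)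
  linarith [sub_eq_zero.mp (abs_eq_zero.mp h2)]

lemma henon_sqrt_diff (a a' c : ℝ) (hc : 0 < c) (ha : c ^ 2 ≤ a) (ha' : c ^ 2 ≤ a') :
    |Real.sqrt a - Real.sqrt a'| ≤ |a - a'| / (2 * c) := by
  have h0 : (0:ℝ) ≤ a := le_trans (sq_nonneg c) ha
  have h0' : (0:ℝ) ≤ a' := le_trans (sq_nonneg c) ha'
  have hsa : c ≤ Real.sqrt a := (Real.le_sqrt hc.le h0).mpr ha
  have hsa' : c ≤ Real.sqrt a' := (Real.le_sqrt hc.le h0').mpr ha'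
  have hmul : (Real.sqrt a - Real.sqrt a') * (Real.sqrt a + Real.sqrt a') = a - a' := by
    have h1 := Real.sq_sqrt h0
    have h2 := Real.sq_sqrt h0'
    nlinarith
  rw [le_div_iff₀ (by linarith)]
  calc |Real.sqrt a - Real.sqrt a'| * (2 * c)
      ≤ |Real.sqrt a - Real.sqrt a'| * (Real.sqrt a + Real.sqrt a') :=
        mul_le_mul_of_nonneg_left (by linarith) (abs_nonneg _)
    _ = |(Real.sqrt a - Real.sqrt a') * (Real.sqrt a + Real.sqrt a')| := by
        rw [abs_mul, abs_of_nonneg (by linarith : (0:ℝ) ≤ Real.sqrt a + Real.sqrt a')]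
    _ = |a - a'| := by rw [hmul]

/-- The Hénon fixed-point operator on bounded sequences. -/
noncomputable def henonT (s : ℤ → ℝ) (hs1 : ∀ t, |s t| = 1) (ε b : ℝ) (z : ℤ →ᵇ ℝ) :
    ℤ →ᵇ ℝ :=
  BoundedContinuousFunction.ofNormedAddCommGroupDiscrete
    (fun t => s t * Real.sqrt (1 + ε * (z (t + 1) + b * z (t - 1))))
    (Real.sqrt (1 + |ε| * (1 + |b|) * ‖z‖))
    (by
      intro t
      rw [Real.norm_eq_abs, abs_mul, hs1 t, one_mul, abs_of_nonneg (Real.sqrt_nonneg _)]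
      apply Real.sqrt_le_sqrt
      have h1 : |z (t + 1)| ≤ ‖z‖ := by
        simpa [Real.norm_eq_abs] using z.norm_coe_le_norm (t + 1)
      have h2 : |z (t - 1)| ≤ ‖z‖ := by
        simpa [Real.norm_eq_abs] using z.norm_coe_le_norm (t - 1)
      have hb := henon_eps_bound ε b ‖z‖ (z (t + 1)) (z (t - 1)) h1 h2
      linarith [le_abs_self (ε * (z (t + 1) + b * z (t - 1)))])

lemma henonT_apply (s : ℤ → ℝ) (hs1 : ∀ t, |s t| = 1) (ε b : ℝ) (z : ℤ →ᵇ ℝ) (t : ℤ) :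
    henonT s hs1 ε b z t = s t * Real.sqrt (1 + ε * (z (t + 1) + b * z (t - 1))) := by
  simp [henonT]

set_option maxHeartbeats 1000000 in
/-- For every symbol sequence `s : ℤ → {±1}` and parameters with
`γ = |ε|(1+|b|) < 2√(1 − 2/√5)`, there is a unique sequence `z` with
`‖z − s‖∞ ≤ M∞ = 1 − √(1 − γ(γ+√(γ²+4))/2)` satisfying the Hénon difference
equation `−ε(z_{t+1} + b z_{t−1}) + z_t² − 1 = 0` for all `t`; moreover any such
`z` satisfies `sign(z_t) = s_t` for all `t`. -/
theorem henon_AI_existence_uniqueness (s : ℤ → ℝ) (hs : ∀ t, s t = 1 ∨ s t = -1)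
    (ε b : ℝ) (hγ : |ε| * (1 + |b|) < 2 * Real.sqrt (1 - 2 / Real.sqrt 5)) :
    let γ := |ε| * (1 + |b|)
    let M := 1 - Real.sqrt (1 - γ * ((γ + Real.sqrt (γ ^ 2 + 4)) / 2))
    (∃! z : ℤ → ℝ, (∀ t, |z t - s t| ≤ M) ∧
        ∀ t : ℤ, -ε * (z (t + 1) + b * z (t - 1)) + (z t) ^ 2 - 1 = 0) ∧
    (∀ z : ℤ → ℝ, (∀ t, |z t - s t| ≤ M) →
      (∀ t : ℤ, -ε * (z (t + 1) + b * z (t - 1)) + (z t) ^ 2 - 1 = 0) →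
      ∀ t, Real.sign (z t) = s t) := by
  intro γ M
  have hγdef : γ = |ε| * (1 + |b|) := rfl
  have hMdef0 : M = 1 - Real.sqrt (1 - γ * ((γ + Real.sqrt (γ ^ 2 + 4)) / 2)) := rfl
  clear_value γ M
  have hγ0 : 0 ≤ γ := by rw [hγdef]; positivity
  have hγ' : γ < 2 * Real.sqrt (1 - 2 / Real.sqrt 5) := by rw [hγdef]; exact hγ
  have hr2 : (2:ℝ) < Real.sqrt 5 := by
    rw [show (2:ℝ) = Real.sqrt 4 by rw [show (4:ℝ) = 2 ^ 2 by norm_num,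
      Real.sqrt_sq (by norm_num : (0:ℝ) ≤ 2)]]
    exact Real.sqrt_lt_sqrt (by norm_num) (by norm_num)
  set d := Real.sqrt (γ ^ 2 + 4) with hd
  have hd2 : d ^ 2 = γ ^ 2 + 4 := Real.sq_sqrt (by positivity)
  have hd0 : 0 ≤ d := Real.sqrt_nonneg _
  have hdge : 2 ≤ d := by
    rw [hd, show (2:ℝ) = Real.sqrt 4 by rw [show (4:ℝ) = 2 ^ 2 by norm_num,
      Real.sqrt_sq (by norm_num : (0:ℝ) ≤ 2)]]
    exact Real.sqrt_le_sqrt (by nlinarith)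
  set β := (γ + d) / 2 with hβdef
  have hβ1 : 1 ≤ β := by rw [hβdef]; linarith
  have hβsq : β ^ 2 = 1 + γ * β := by rw [hβdef]; nlinarith
  set p := γ * β with hpdef
  have hp0 : 0 ≤ p := mul_nonneg hγ0 (by linarith)
  have hplt : p < 2 / Real.sqrt 5 := henon_aux_p_lt γ hγ0 hγ'
  have hp1 : p < 1 := lt_trans hplt (by rw [div_lt_one (by linarith)]; linarith)
  have h1p : 0 < 1 - p := by linarith
  have hMdef : M = 1 - Real.sqrt (1 - p) := hMdef0
  have hsp5 : p * Real.sqrt 5 < 2 := by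
    rw [← lt_div_iff₀ (by linarith : (0:ℝ) < Real.sqrt 5)]; exact hplt
  have h5p : 5 * p ^ 2 < 4 := by
    nlinarith [Real.sq_sqrt (by norm_num : (0:ℝ) ≤ 5), hp0]
  have hγsq : γ ^ 2 * (1 + p) = p ^ 2 := by
    rw [hpdef]; linear_combination (-(γ^2)) * hβsq
  have hγlt : γ ^ 2 < 4 * (1 - p) := by nlinarith [hγsq, h5p, hp0, hp1]
  have hsqrt1p_pos : 0 < Real.sqrt (1 - p) := Real.sqrt_pos.mpr h1p
  have hsqrt1p_le1 : Real.sqrt (1 - p) ≤ 1 := by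
    calc Real.sqrt (1 - p) ≤ Real.sqrt 1 := Real.sqrt_le_sqrt (by linarith)
      _ = 1 := Real.sqrt_one
  have hM0 : 0 ≤ M := by rw [hMdef]; linarith
  have hM1 : M < 1 := by rw [hMdef]; linarith
  have h1M : 1 - M = Real.sqrt (1 - p) := by rw [hMdef]; ring
  have h1Msq : (1 - M) ^ 2 = 1 - p := by rw [h1M]; exact Real.sq_sqrt h1p.le
  have hcontr : γ < 2 * (1 - M) := by
    rw [h1M]
    have : γ / 2 < Real.sqrt (1 - p) :=
      (Real.lt_sqrt (by positivity)).mpr (by nlinarith)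
    linarith
  have hβle : β ≤ 1 + M := by
    have hβlt2 : β < 2 := by nlinarith [hβsq, hp1, hβ1]
    have h2 : Real.sqrt (1 - p) ≤ 2 - β := by
      rw [show (2 - β) = Real.sqrt ((2 - β) ^ 2) from (Real.sqrt_sq (by linarith)).symm]
      exact Real.sqrt_le_sqrt (by nlinarith)
    have h3 : 1 - M ≤ 2 - β := by rw [h1M]; exact h2
    linarith
  have hs1 : ∀ t, |s t| = 1 := by
    intro t; rcases hs t with h | h <;> rw [h] <;> norm_num
  -- the invariant set
  set S : Set (ℤ →ᵇ ℝ) := {z | ∀ t : ℤ, |z t - s t| ≤ M ∧ |z t| ≤ β} with hSdef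
  have hSclosed : IsClosed S := by
    have hrepr : S = ⋂ t : ℤ,
        ((fun z : ℤ →ᵇ ℝ => z t) ⁻¹' {x : ℝ | |x - s t| ≤ M ∧ |x| ≤ β}) := by
      ext z; simp [hSdef, Set.mem_iInter]
    rw [hrepr]
    refine isClosed_iInter fun t =>
      IsClosed.preimage (continuous_eval_const t) ?_
    exact (isClosed_le ((continuous_id.sub continuous_const).abs) continuous_const).inter
      (isClosed_le continuous_abs continuous_const)
  have habd : ∀ z : ℤ →ᵇ ℝ, z ∈ S → ∀ t : ℤ,
      |(1 + ε * (z (t + 1) + b * z (t - 1))) - 1| ≤ p := by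
    intro z hz t
    have h := henon_eps_bound ε b β (z (t + 1)) (z (t - 1)) (hz (t + 1)).2 (hz (t - 1)).2
    calc |(1 + ε * (z (t + 1) + b * z (t - 1))) - 1|
        = |ε * (z (t + 1) + b * z (t - 1))| := by ring_nf
      _ ≤ |ε| * (1 + |b|) * β := h
      _ = p := by rw [hpdef, hγdef]
  have hsqrtbounds : ∀ a : ℝ, |a - 1| ≤ p →
      (1 - M ≤ Real.sqrt a ∧ Real.sqrt a ≤ β) := by
    intro a ha
    have h1 := (abs_le.mp ha).1
    have h2 := (abs_le.mp ha).2
    constructor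
    · rw [h1M]; exact Real.sqrt_le_sqrt (by linarith)
    · calc Real.sqrt a ≤ Real.sqrt (β ^ 2) := Real.sqrt_le_sqrt (by nlinarith)
        _ = β := Real.sqrt_sq (by linarith)
  have hmaps : Set.MapsTo (henonT s hs1 ε b) S S := by
    intro z hz t
    have ha := habd z hz t
    obtain ⟨hlo, hhi⟩ := hsqrtbounds _ ha
    rw [henonT_apply]
    constructor
    · rcases hs t with h | h
      · rw [h, one_mul]
        exact abs_le.mpr ⟨by linarith, by linarith⟩
      · rw [h]
        have hre : (-1 : ℝ) * Real.sqrt (1 + ε * (z (t + 1) + b * z (t - 1))) - (-1)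
            = -(Real.sqrt (1 + ε * (z (t + 1) + b * z (t - 1))) - 1) := by ring
        rw [hre, abs_neg]
        exact abs_le.mpr ⟨by linarith, by linarith⟩
    · rw [abs_mul, hs1 t, one_mul, abs_of_nonneg (Real.sqrt_nonneg _)]
      exact hhi
  have h2M : 0 < 2 * (1 - M) := by linarith
  set L : ℝ := γ / (2 * (1 - M)) with hLdef
  have hL0 : 0 ≤ L := by positivity
  have hL1 : L < 1 := by rw [hLdef, div_lt_one h2M]; exact hcontr
  set K : NNReal := ⟨L, hL0⟩ with hKdef
  have hKcoe : (K : ℝ) = L := rfl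
  have hdistle : ∀ z w : ℤ →ᵇ ℝ, z ∈ S → w ∈ S →
      dist (henonT s hs1 ε b z) (henonT s hs1 ε b w) ≤ L * dist z w := by
    intro z w hz hw
    rw [BoundedContinuousFunction.dist_le (by positivity)]
    intro t
    rw [Real.dist_eq, henonT_apply, henonT_apply]
    have haz := habd z hz t
    have haw := habd w hw t
    have hcM : (1 - M) ^ 2 ≤ 1 + ε * (z (t + 1) + b * z (t - 1)) := by
      rw [h1Msq]; linarith [(abs_le.mp haz).1]
    have hcM' : (1 - M) ^ 2 ≤ 1 + ε * (w (t + 1) + b * w (t - 1)) := by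
      rw [h1Msq]; linarith [(abs_le.mp haw).1]
    have hzt1 : |z (t + 1) - w (t + 1)| ≤ dist z w := by
      rw [← Real.dist_eq]; exact BoundedContinuousFunction.dist_coe_le_dist _
    have hzt2 : |z (t - 1) - w (t - 1)| ≤ dist z w := by
      rw [← Real.dist_eq]; exact BoundedContinuousFunction.dist_coe_le_dist _
    have hdiff : |(1 + ε * (z (t + 1) + b * z (t - 1)))
        - (1 + ε * (w (t + 1) + b * w (t - 1)))| ≤ γ * dist z w := by
      calc |(1 + ε * (z (t + 1) + b * z (t - 1))) - (1 + ε * (w (t + 1) + b * w (t - 1)))|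
          = |ε * ((z (t + 1) - w (t + 1)) + b * (z (t - 1) - w (t - 1)))| := by ring_nf
        _ ≤ |ε| * (1 + |b|) * dist z w := henon_eps_bound ε b (dist z w) _ _ hzt1 hzt2
        _ = γ * dist z w := by rw [hγdef]
    calc |s t * Real.sqrt (1 + ε * (z (t + 1) + b * z (t - 1)))
          - s t * Real.sqrt (1 + ε * (w (t + 1) + b * w (t - 1)))|
        = |s t| * |Real.sqrt (1 + ε * (z (t + 1) + b * z (t - 1)))
            - Real.sqrt (1 + ε * (w (t + 1) + b * w (t - 1)))| := by
          rw [← abs_mul]; ring_nf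
      _ = |Real.sqrt (1 + ε * (z (t + 1) + b * z (t - 1)))
            - Real.sqrt (1 + ε * (w (t + 1) + b * w (t - 1)))| := by rw [hs1 t, one_mul]
      _ ≤ |(1 + ε * (z (t + 1) + b * z (t - 1)))
            - (1 + ε * (w (t + 1) + b * w (t - 1)))| / (2 * (1 - M)) :=
          henon_sqrt_diff _ _ (1 - M) (by linarith) hcM hcM'
      _ ≤ γ * dist z w / (2 * (1 - M)) := by gcongr
      _ = L * dist z w := by rw [hLdef]; ring
  have hcontracting : ContractingWith K (hmaps.restrict (henonT s hs1 ε b) S S) := by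
    constructor
    · exact_mod_cast hL1
    · apply LipschitzWith.of_dist_le_mul
      rintro ⟨z, hz⟩ ⟨w, hw⟩
      show dist (henonT s hs1 ε b z) (henonT s hs1 ε b w) ≤ K * dist z w
      rw [hKcoe]
      exact hdistle z w hz hw
  set sB : ℤ →ᵇ ℝ := BoundedContinuousFunction.ofNormedAddCommGroupDiscrete s 1
    (by intro t; rw [Real.norm_eq_abs, hs1 t]) with hsBdef
  have hsBcoe : ∀ t, sB t = s t := by intro t; simp [hsBdef]
  have hsBS : sB ∈ S := by
    intro t
    rw [hsBcoe t]
    constructor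
    · simp [hM0]
    · rw [hs1 t]; linarith
  obtain ⟨y, hyS, hyfix, -, -⟩ := ContractingWith.exists_fixedPoint'
    hSclosed.isComplete hmaps hcontracting hsBS (edist_ne_top _ _)
  have hyball : ∀ t, |y t - s t| ≤ M := fun t => (hyS t).1
  have hyeq : ∀ t : ℤ, -ε * (y (t + 1) + b * y (t - 1)) + (y t) ^ 2 - 1 = 0 := by
    intro t
    have h1 : y t = s t * Real.sqrt (1 + ε * (y (t + 1) + b * y (t - 1))) := by
      conv_lhs => rw [← hyfix]
      exact henonT_apply s hs1 ε b y t
    have hposrad : 0 ≤ 1 + ε * (y (t + 1) + b * y (t - 1)) := by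
      have := (abs_le.mp (habd y hyS t)).1
      linarith
    have hsq : (y t) ^ 2 = 1 + ε * (y (t + 1) + b * y (t - 1)) := by
      rw [h1, mul_pow, Real.sq_sqrt hposrad]
      rcases hs t with h | h <;> rw [h] <;> ring
    linarith
  have huniq : ∀ z : ℤ → ℝ, (∀ t, |z t - s t| ≤ M) →
      (∀ t : ℤ, -ε * (z (t + 1) + b * z (t - 1)) + (z t) ^ 2 - 1 = 0) →
      z = fun t => y t := by
    intro z hzball hzeq
    exact henon_unique_aux s hs ε b M hM1 (by rw [← hγdef]; exact hcontr)
      z (fun t => y t) hzball hyball hzeq hyeq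
  constructor
  · exact ⟨fun t => y t, ⟨hyball, hyeq⟩, fun z hz => huniq z hz.1 hz.2⟩
  · intro z hzball _ t
    rcases hs t with h | h
    · have h1 := (abs_le.mp (hzball t)).1
      rw [h] at h1 ⊢
      have hpos : 0 < z t := by linarith
      rw [Real.sign_of_pos hpos]
    · have h2 := (abs_le.mp (hzball t)).2
      rw [h] at h2 ⊢
      have hneg : z t < 0 := by linarith
      rw [Real.sign_of_neg hneg]
end

section
/- Let z* ∈ ℝⁿ (or ℓ∞) with ‖z*‖∞ ≥ 1 − M, and consider the system dζ_i/dτ = Σ_j A_{ij} ζ_j − s_i ζ_i², where A is as in the linearized Biham–Wenzel flow with s_i z*_i = |z*_i| ≥ 1 − M and off-diagonal ℓ∞ row sums at most γ. Then along solutions, the function ‖ζ(τ)‖∞ satisfies the differential inequality d/dτ ‖ζ‖∞ ≤ (−2(1−M) + γ + ‖ζ‖∞)·‖ζ‖∞, so the ball {ζ : ‖ζ‖∞ < 2(1−M) − γ} is contained in the basin of attraction of ζ = 0 whenever 2(1−M) − γ > 0. -/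
open Filter Set in
/-- Key estimate: the forward difference quotient of the sup norm is eventually
below any `r` exceeding the Dini bound. -/
theorem biham_wenzel_key (n : ℕ) [NeZero n] (ε b M : ℝ) (hM : M < 1)
    (s zstar : Fin n → ℝ) (hs : ∀ i, s i = 1 ∨ s i = -1)
    (hsz : ∀ i, s i * zstar i = |zstar i|) (hz : ∀ i, 1 - M ≤ |zstar i|)
    (A : Matrix (Fin n) (Fin n) ℝ)
    (hA : ∀ i j, A i j = s i * (ε * ((if j = i + 1 then 1 else 0) +
        b * (if j = i - 1 then 1 else 0)) - 2 * zstar j * (if i = j then 1 else 0)))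
    (ζ : ℝ → (Fin n → ℝ))
    (hζ : ∀ τ ∈ Set.Ici (0 : ℝ), ∀ i,
      HasDerivWithinAt (fun τ' => ζ τ' i)
        ((∑ j, A i j * ζ τ j) - s i * (ζ τ i) ^ 2) (Set.Ici (0 : ℝ)) τ)
    (τ : ℝ) (hτ : τ ∈ Set.Ici (0:ℝ)) (r : ℝ)
    (hr : (-2 * (1 - M) + |ε| * (1 + |b|) + ‖ζ τ‖) * ‖ζ τ‖ < r) :
    ∀ᶠ h in nhdsWithin 0 (Set.Ioi (0:ℝ)), (‖ζ (τ + h)‖ - ‖ζ τ‖) / h < r := by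
  set v : Fin n → ℝ := ζ τ with hv
  set N : ℝ := ‖v‖ with hN
  set γ : ℝ := |ε| * (1 + |b|) with hγ
  set R : ℝ := (-2 * (1 - M) + γ + N) * N with hR
  set d : Fin n → ℝ := fun i => (∑ j, A i j * v j) - s i * v i ^ 2 with hd
  have hNnn : 0 ≤ N := norm_nonneg v
  have habs : ∀ k, |v k| ≤ N := fun k => by
    simpa [Real.norm_eq_abs] using norm_le_pi_norm v k
  have hsabs : ∀ i, |s i| = 1 := fun i => by rcases hs i with h | h <;> simp [h]
  have hsum : ∀ j, (∑ k, A j k * v k)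
      = s j * (ε * (v (j+1) + b * v (j-1))) - 2 * |zstar j| * v j := by
    intro j
    have e1 : ∀ k, A j k * v k
        = s j * ε * (if k = j+1 then v k else 0)
          + s j * (ε * b) * (if k = j-1 then v k else 0)
          - 2 * s j * (if j = k then zstar k * v k else 0) := by
      intro k
      rw [hA]
      split_ifs <;> ring
    calc (∑ k, A j k * v k)
        = ∑ k, (s j * ε * (if k = j+1 then v k else 0)
            + s j * (ε * b) * (if k = j-1 then v k else 0)
            - 2 * s j * (if j = k then zstar k * v k else 0)) :=
          Finset.sum_congr rfl fun k _ => e1 k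
      _ = s j * ε * v (j+1) + s j * (ε * b) * v (j-1) - 2 * s j * (zstar j * v j) := by
          rw [Finset.sum_sub_distrib, Finset.sum_add_distrib, ← Finset.mul_sum,
            ← Finset.mul_sum, ← Finset.mul_sum, Finset.sum_ite_eq', Finset.sum_ite_eq',
            Finset.sum_ite_eq]
          simp
      _ = s j * (ε * (v (j+1) + b * v (j-1))) - 2 * (s j * zstar j) * v j := by ring
      _ = _ := by rw [hsz j]
  have hstep : ∀ j, ∀ h : ℝ, 0 < h → 2 * h * |zstar j| ≤ 1 →
      |v j + h * d j| ≤ N + h * R := by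
    intro j h hh hz1
    have hdj : v j + h * d j
        = (1 - 2*h*|zstar j|) * v j
          + h * (s j * (ε * (v (j+1) + b * v (j-1)) - v j ^ 2)) := by
      have : d j = s j * (ε * (v (j+1) + b * v (j-1))) - 2 * |zstar j| * v j
          - s j * v j ^ 2 := by
        rw [hd]; simp only; rw [hsum j]
      rw [this]; ring
    rw [hdj]
    have hznn : (0:ℝ) ≤ 2*h*|zstar j| := by positivity
    have h2 : |(1 - 2*h*|zstar j|) * v j| ≤ (1 - 2*h*(1-M)) * N := by
      rw [abs_mul, abs_of_nonneg (by linarith)]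
      calc (1 - 2*h*|zstar j|) * |v j| ≤ (1 - 2*h*|zstar j|) * N :=
            mul_le_mul_of_nonneg_left (habs j) (by linarith)
        _ ≤ (1 - 2*h*(1-M)) * N := by
            apply mul_le_mul_of_nonneg_right _ hNnn
            have := hz j
            nlinarith
    have h3 : |s j * (ε * (v (j+1) + b * v (j-1)) - v j ^ 2)| ≤ γ * N + N^2 := by
      rw [abs_mul, hsabs j, one_mul]
      have a1 : |ε * (v (j+1) + b * v (j-1))| ≤ |ε| * (N + |b| * N) := by
        rw [abs_mul]
        gcongr
        calc |v (j+1) + b * v (j-1)| ≤ |v (j+1)| + |b * v (j-1)| := abs_add_le _ _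
          _ = |v (j+1)| + |b| * |v (j-1)| := by rw [abs_mul]
          _ ≤ N + |b| * N := by gcongr <;> [exact habs _; exact habs _]
      have a2 : |v j ^ 2| ≤ N ^ 2 := by
        rw [abs_pow]
        gcongr
        exact habs j
      calc |ε * (v (j+1) + b * v (j-1)) - v j ^ 2|
          ≤ |ε * (v (j+1) + b * v (j-1))| + |v j ^ 2| := abs_sub _ _
        _ ≤ |ε| * (N + |b| * N) + N ^ 2 := add_le_add a1 a2
        _ = γ * N + N ^ 2 := by rw [hγ]; ring
    calc |(1 - 2*h*|zstar j|) * v j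
          + h * (s j * (ε * (v (j+1) + b * v (j-1)) - v j ^ 2))|
        ≤ |(1 - 2*h*|zstar j|) * v j|
          + |h * (s j * (ε * (v (j+1) + b * v (j-1)) - v j ^ 2))| := abs_add_le _ _
      _ = |(1 - 2*h*|zstar j|) * v j|
          + h * |s j * (ε * (v (j+1) + b * v (j-1)) - v j ^ 2)| := by
          congr 1
          rw [abs_mul, abs_of_pos hh]
      _ ≤ (1 - 2*h*(1-M)) * N + h * (γ * N + N^2) :=
          add_le_add h2 (mul_le_mul_of_nonneg_left h3 hh.le)
      _ = N + h * R := by rw [hR]; ring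
  have hslope : ∀ j, Tendsto (fun h : ℝ => (ζ (τ + h) j - v j) / h)
      (nhdsWithin 0 (Set.Ioi (0:ℝ))) (nhds (d j)) := by
    intro j
    have h1 := hζ τ hτ j
    rw [hasDerivWithinAt_iff_tendsto_slope] at h1
    have hsub : Set.Ioi τ ⊆ Set.Ici (0:ℝ) \ {τ} := fun x hx =>
      ⟨Set.mem_Ici.2 (le_trans (Set.mem_Ici.1 hτ) (le_of_lt (Set.mem_Ioi.1 hx))), ne_of_gt hx⟩
    have h2 : Tendsto (slope (fun τ' => ζ τ' j) τ) (nhdsWithin τ (Set.Ioi τ))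
        (nhds (d j)) := h1.mono_left (nhdsWithin_mono τ hsub)
    have h3 : Tendsto (fun h : ℝ => τ + h) (nhdsWithin 0 (Set.Ioi (0:ℝ)))
        (nhdsWithin τ (Set.Ioi τ)) := by
      rw [tendsto_nhdsWithin_iff]
      constructor
      · have : Tendsto (fun h : ℝ => τ + h) (nhds 0) (nhds (τ + 0)) :=
          (continuous_const.add continuous_id).tendsto 0
        simpa using this.mono_left nhdsWithin_le_nhds
      · exact eventually_mem_nhdsWithin.mono fun h hh => by
          simpa using (hh : (0:ℝ) < h)
    have h4 := h2.comp h3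
    refine h4.congr fun h => ?_
    simp only [Function.comp_apply, slope_def_field]
    rw [add_sub_cancel_left]
  have E1 : ∀ᶠ h in nhdsWithin 0 (Set.Ioi (0:ℝ)), (0:ℝ) < h :=
    eventually_mem_nhdsWithin
  have E2 : ∀ᶠ h in nhdsWithin 0 (Set.Ioi (0:ℝ)),
      ∀ j, |(ζ (τ + h) j - v j) / h - d j| ≤ (r - R) / 2 := by
    rw [eventually_all]
    intro j
    have hε : (0:ℝ) < (r - R) / 2 := by
      rw [hR] at hr ⊢
      linarith
    have := Metric.tendsto_nhds.mp (hslope j) ((r - R) / 2) hε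
    exact this.mono fun h hh => by
      rw [Real.dist_eq] at hh
      exact hh.le
  have E3 : ∀ᶠ h in nhdsWithin 0 (Set.Ioi (0:ℝ)), ∀ j, 2 * h * |zstar j| ≤ 1 := by
    rw [eventually_all]
    intro j
    have ht : Tendsto (fun h : ℝ => 2 * h * |zstar j|) (nhdsWithin 0 (Set.Ioi (0:ℝ)))
        (nhds 0) := by
      have : Tendsto (fun h : ℝ => 2 * h * |zstar j|) (nhds 0)
          (nhds (2 * 0 * |zstar j|)) := by
        exact ((continuous_const.mul continuous_id).mul continuous_const).tendsto 0
      simpa using this.mono_left nhdsWithin_le_nhds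
    exact (ht.eventually_lt_const one_pos).mono fun h hh => hh.le
  filter_upwards [E1, E2, E3] with h h1 h2 h3
  have hb : ∀ j, |ζ (τ + h) j| ≤ N + h * ((R + r) / 2) := by
    intro j
    have e : ζ (τ + h) j = (v j + h * d j) + h * ((ζ (τ + h) j - v j) / h - d j) := by
      field_simp
      ring
    rw [e]
    calc |(v j + h * d j) + h * ((ζ (τ + h) j - v j) / h - d j)|
        ≤ |v j + h * d j| + |h * ((ζ (τ + h) j - v j) / h - d j)| := abs_add_le _ _
      _ ≤ (N + h * R) + h * ((r - R) / 2) := by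
          refine add_le_add (hstep j h h1 (h3 j)) ?_
          rw [abs_mul, abs_of_pos h1]
          exact mul_le_mul_of_nonneg_left (h2 j) h1.le
      _ = N + h * ((R + r) / 2) := by ring
  have hnn : 0 ≤ N + h * ((R + r) / 2) :=
    le_trans (abs_nonneg _) (hb ⟨0, Nat.pos_of_ne_zero (NeZero.ne n)⟩)
  have hnorm : ‖ζ (τ + h)‖ ≤ N + h * ((R + r) / 2) := by
    rw [pi_norm_le_iff_of_nonneg hnn]
    intro i
    rw [Real.norm_eq_abs]
    exact hb i
  rw [div_lt_iff₀ h1]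
  have hRr : R < r := by rw [hR] at hr ⊢; exact hr
  nlinarith [hnorm]

open Filter in
/-- For the deviation system `ζ' = Aζ − s ζ²` about a Hénon orbit `z*` with
`s i z*_i = |z*_i| ≥ 1 − M` and off-diagonal row sums of `A` bounded by
`γ = |ε|(1+|b|)`, the sup norm of a solution satisfies the Dini differential
inequality `D⁺‖ζ‖∞ ≤ (−2(1−M) + γ + ‖ζ‖∞)‖ζ‖∞`, and when `2(1−M) − γ > 0` the
ball `{ζ : ‖ζ‖∞ < 2(1−M) − γ}` lies in the basin of attraction of `0`. -/
theorem biham_wenzel_basin (n : ℕ) [NeZero n] (ε b M : ℝ) (hM : M < 1)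
    (s zstar : Fin n → ℝ) (hs : ∀ i, s i = 1 ∨ s i = -1)
    (hsz : ∀ i, s i * zstar i = |zstar i|) (hz : ∀ i, 1 - M ≤ |zstar i|)
    (A : Matrix (Fin n) (Fin n) ℝ)
    (hA : ∀ i j, A i j = s i * (ε * ((if j = i + 1 then 1 else 0) +
        b * (if j = i - 1 then 1 else 0)) - 2 * zstar j * (if i = j then 1 else 0)))
    (ζ : ℝ → (Fin n → ℝ))
    (hζ : ∀ τ ∈ Set.Ici (0 : ℝ), ∀ i,
      HasDerivWithinAt (fun τ' => ζ τ' i)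
        ((∑ j, A i j * ζ τ j) - s i * (ζ τ i) ^ 2) (Set.Ici (0 : ℝ)) τ) :
    (∀ τ ∈ Set.Ici (0 : ℝ),
      Filter.limsup (fun h : ℝ => (‖ζ (τ + h)‖ - ‖ζ τ‖) / h)
          (nhdsWithin 0 (Set.Ioi 0)) ≤
        (-2 * (1 - M) + |ε| * (1 + |b|) + ‖ζ τ‖) * ‖ζ τ‖) ∧
    (0 < 2 * (1 - M) - |ε| * (1 + |b|) →
      ‖ζ 0‖ < 2 * (1 - M) - |ε| * (1 + |b|) →
      Filter.Tendsto ζ Filter.atTop (nhds 0)) := by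
  have key := biham_wenzel_key n ε b M hM s zstar hs hsz hz A hA ζ hζ
  constructor
  · intro τ hτ
    set R : ℝ := (-2 * (1 - M) + |ε| * (1 + |b|) + ‖ζ τ‖) * ‖ζ τ‖ with hR
    have cob : IsCoboundedUnder (· ≤ ·) (nhdsWithin 0 (Set.Ioi (0:ℝ)))
        (fun h : ℝ => (‖ζ (τ + h)‖ - ‖ζ τ‖) / h) := by
      have hD : HasDerivWithinAt ζ
          (fun i => (∑ j, A i j * ζ τ j) - s i * (ζ τ i) ^ 2) (Set.Ici (0:ℝ)) τ :=
        hasDerivWithinAt_pi.2 (hζ τ hτ)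
      set D : Fin n → ℝ := fun i => (∑ j, A i j * ζ τ j) - s i * (ζ τ i) ^ 2 with hDdef
      rw [hasDerivWithinAt_iff_tendsto_slope] at hD
      have hsub : Set.Ioi τ ⊆ Set.Ici (0:ℝ) \ {τ} := fun x hx =>
        ⟨Set.mem_Ici.2 (le_trans (Set.mem_Ici.1 hτ) (le_of_lt (Set.mem_Ioi.1 hx))), ne_of_gt hx⟩
      have h2 : Filter.Tendsto (slope ζ τ) (nhdsWithin τ (Set.Ioi τ)) (nhds D) :=
        hD.mono_left (nhdsWithin_mono τ hsub)
      have h3 : Filter.Tendsto (fun h : ℝ => τ + h) (nhdsWithin 0 (Set.Ioi (0:ℝ)))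
          (nhdsWithin τ (Set.Ioi τ)) := by
        rw [tendsto_nhdsWithin_iff]
        refine ⟨?_, eventually_mem_nhdsWithin.mono fun h hh => by
          simpa using (hh : (0:ℝ) < h)⟩
        have : Filter.Tendsto (fun h : ℝ => τ + h) (nhds 0) (nhds (τ + 0)) :=
          (continuous_const.add continuous_id).tendsto 0
        simpa using this.mono_left nhdsWithin_le_nhds
      have h4 := (h2.comp h3).norm
      have h5 := h4.eventually_lt_const (lt_add_one ‖D‖)
      apply Filter.isCoboundedUnder_le_of_eventually_le _ (x := -(‖D‖ + 1))
      filter_upwards [h5, eventually_mem_nhdsWithin] with h hh hmem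
      have hpos : (0:ℝ) < h := hmem
      have e1 : ‖(slope ζ τ ∘ fun h : ℝ => τ + h) h‖ = ‖ζ (τ + h) - ζ τ‖ / h := by
        simp only [Function.comp_apply, slope_def_module]
        rw [add_sub_cancel_left, norm_smul, norm_inv, Real.norm_eq_abs, abs_of_pos hpos,
          div_eq_inv_mul]
      rw [e1, div_lt_iff₀ hpos] at hh
      have e2 : ‖ζ τ‖ - ‖ζ (τ + h)‖ ≤ ‖ζ (τ + h) - ζ τ‖ := by
        have a1 := norm_sub_norm_le (ζ τ) (ζ (τ + h))
        have a2 := norm_sub_rev (ζ τ) (ζ (τ + h))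
        linarith [a1, a2.le, a2.ge]
      rw [le_div_iff₀ hpos]
      linarith
    refine le_of_forall_gt_imp_ge_of_dense fun r hr => ?_
    exact Filter.limsup_le_of_le cob ((key τ hτ r hr).mono fun h hh => hh.le)
  · intro hc h0
    set c : ℝ := 2 * (1 - M) - |ε| * (1 + |b|) with hcdef
    set f : ℝ → ℝ := fun t => ‖ζ t‖ with hf
    have hfc : ContinuousOn f (Set.Ici (0:ℝ)) := by
      have : ContinuousOn ζ (Set.Ici (0:ℝ)) := fun τ hτ =>
        continuousWithinAt_pi.2 fun i => (hζ τ hτ i).continuousWithinAt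
      exact this.norm
    have hfnn : ∀ t, 0 ≤ f t := fun t => norm_nonneg _
    have hkey' : ∀ x ∈ Set.Ici (0:ℝ), ∀ r, (f x - c) * f x < r →
        ∃ᶠ z in nhdsWithin x (Set.Ioi x), slope f x z < r := by
      intro x hx r hr
      have hr' : (-2 * (1 - M) + |ε| * (1 + |b|) + ‖ζ x‖) * ‖ζ x‖ < r := by
        have : (-2 * (1 - M) + |ε| * (1 + |b|) + ‖ζ x‖) = f x - c := by
          rw [hcdef, hf]; ring
        rw [this]; exact hr
      have hev := key x hx r hr'
      have hmap : Tendsto (fun z : ℝ => z - x) (nhdsWithin x (Set.Ioi x))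
          (nhdsWithin 0 (Set.Ioi (0:ℝ))) := by
        rw [tendsto_nhdsWithin_iff]
        constructor
        · have : Tendsto (fun z : ℝ => z - x) (nhds x) (nhds (x - x)) :=
            (continuous_id.sub continuous_const).tendsto x
          simpa using this.mono_left nhdsWithin_le_nhds
        · exact eventually_mem_nhdsWithin.mono fun z hz => by
            simpa using (hz : x < z)
      have := hmap.eventually hev
      refine this.frequently.mono fun z hz => ?_
      rw [slope_def_field]
      have e : x + (z - x) = z := by ring
      rw [e] at hz
      exact hz
    have hK : ∀ t ∈ Set.Ici (0:ℝ), f t ≤ (f 0 + c) / 2 := by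
      set K : ℝ := (f 0 + c) / 2 with hKdef
      have hKpos : 0 < K := by
        have := hfnn 0
        rw [hKdef]; linarith
      have hKlt : K < c := by rw [hKdef]; have : f 0 < c := h0; linarith
      intro t ht
      have hT : t ∈ Set.Icc (0:ℝ) t := ⟨ht, le_refl t⟩
      refine image_le_of_liminf_slope_right_lt_deriv_boundary'
        (f' := fun x => (f x - c) * f x) (B := fun _ => K) (B' := fun _ => 0)
        (hfc.mono Set.Icc_subset_Ici_self)
        (fun x hx r hr => hkey' x hx.1 r hr)
        ?_ continuousOn_const (fun x _ => hasDerivWithinAt_const x _ K) ?_ hT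
      · have : f 0 < c := h0
        rw [hKdef]; linarith
      · intro x _ hfx
        show (f x - c) * f x < 0
        have hfx' : f x = K := hfx
        rw [hfx']
        exact mul_neg_of_neg_of_pos (by linarith) hKpos
    set K : ℝ := (f 0 + c) / 2 with hKdef
    have hKpos : 0 < K := by have := hfnn 0; rw [hKdef]; linarith
    have hKlt : K < c := by rw [hKdef]; have : f 0 < c := h0; linarith
    set δ : ℝ := (c - K) / 2 with hδdef
    have hδpos : 0 < δ := by rw [hδdef]; linarith
    have hB : ∀ x : ℝ, HasDerivAt (fun t => K * Real.exp (-(δ/2) * t))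
        (K * (Real.exp (-(δ/2) * x) * (-(δ/2)))) x := by
      intro x
      have h1 : HasDerivAt (fun t : ℝ => -(δ/2) * t) (-(δ/2)) x := by
        simpa using (hasDerivAt_id x).const_mul (-(δ/2))
      exact ((Real.hasDerivAt_exp _).comp x h1).const_mul K |>.congr_deriv (by ring)
    have hdecay : ∀ t ∈ Set.Ici (0:ℝ), f t ≤ K * Real.exp (-(δ/2) * t) := by
      intro t ht
      have hT : t ∈ Set.Icc (0:ℝ) t := ⟨ht, le_refl t⟩
      refine image_le_of_liminf_slope_right_lt_deriv_boundary
        (f' := fun x => (f x - c) * f x)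
        (B := fun t => K * Real.exp (-(δ/2) * t))
        (B' := fun x => K * (Real.exp (-(δ/2) * x) * (-(δ/2))))
        (hfc.mono Set.Icc_subset_Ici_self)
        (fun x hx r hr => hkey' x hx.1 r hr)
        ?_ hB ?_ hT
      · have h0' : f 0 < c := h0
        have hfK : f 0 ≤ K := by rw [hKdef]; linarith
        simpa using hfK
      · intro x hx hfx
        show (f x - c) * f x < K * (Real.exp (-(δ/2) * x) * (-(δ/2)))
        have hfx' : f x = K * Real.exp (-(δ/2) * x) := hfx
        have hfxK : f x ≤ K := hK x hx.1
        have hfxpos : 0 < f x := by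
          rw [hfx']
          positivity
        have h1 : f x - c ≤ -2 * δ := by rw [hδdef]; linarith
        have h2 : (f x - c) * f x ≤ -2 * δ * f x :=
          mul_le_mul_of_nonneg_right h1 hfxpos.le
        have h3 : K * (Real.exp (-(δ/2) * x) * (-(δ/2))) = -(δ/2) * f x := by
          rw [hfx']; ring
        rw [h3]
        nlinarith
    rw [tendsto_zero_iff_norm_tendsto_zero]
    have hg : Tendsto (fun t : ℝ => K * Real.exp (-(δ/2) * t)) atTop (nhds 0) := by
      have h1 : Tendsto (fun t : ℝ => (δ/2) * t) atTop atTop :=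
        Tendsto.const_mul_atTop (by linarith) tendsto_id
      have h2 : Tendsto (fun t : ℝ => Real.exp (-((δ/2) * t))) atTop (nhds 0) :=
        Real.tendsto_exp_neg_atTop_nhds_zero.comp h1
      have h3 := h2.const_mul K
      rw [mul_zero] at h3
      exact h3.congr fun t => by ring_nf
    refine squeeze_zero' (Filter.Eventually.of_forall fun t => norm_nonneg _)
      ?_ hg
    filter_upwards [Filter.eventually_ge_atTop (0:ℝ)] with t ht
    exact hdecay t ht
end

section
/- The inequality 3·M∞(γ) < 2 − γ, where M∞(γ) = 1 − √(1 − γ(γ + √(γ²+4))/2), holds for all γ with 0 ≤ γ < γ*, where γ* ∈ (0.5556, 0.5557) is the unique positive solution of 3M∞(γ) = 2 − γ; in particular the inequality holds for all 0 ≤ γ ≤ 0.5556. -/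
private noncomputable def fγ (γ : ℝ) : ℝ :=
  3 * (1 - Real.sqrt (1 - γ * ((γ + Real.sqrt (γ ^ 2 + 4)) / 2))) - (2 - γ)

private lemma fγ_strictMono : StrictMonoOn fγ (Set.Ici 0) := by
  intro x hx y hy hxy
  simp only [Set.mem_Ici] at hx hy
  have hsx : Real.sqrt (x ^ 2 + 4) ≤ Real.sqrt (y ^ 2 + 4) :=
    Real.sqrt_le_sqrt (by nlinarith)
  have hsx0 : 0 ≤ Real.sqrt (x ^ 2 + 4) := Real.sqrt_nonneg _
  have hg : x * ((x + Real.sqrt (x ^ 2 + 4)) / 2) ≤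
      y * ((y + Real.sqrt (y ^ 2 + 4)) / 2) := by nlinarith
  have hs : Real.sqrt (1 - y * ((y + Real.sqrt (y ^ 2 + 4)) / 2)) ≤
      Real.sqrt (1 - x * ((x + Real.sqrt (x ^ 2 + 4)) / 2)) :=
    Real.sqrt_le_sqrt (by linarith)
  unfold fγ
  linarith

private lemma fγ_cont : Continuous fγ := by
  unfold fγ
  fun_prop

private lemma fγ_a : fγ 0.5556 < 0 := by
  have h1 : Real.sqrt ((0.5556 : ℝ) ^ 2 + 4) < 2.0758 := by
    rw [Real.sqrt_lt' (by norm_num)]; norm_num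
  have h2 : ((1 : ℝ) + 0.5556) / 3 <
      Real.sqrt (1 - 0.5556 * ((0.5556 + Real.sqrt ((0.5556 : ℝ) ^ 2 + 4)) / 2)) := by
    rw [Real.lt_sqrt (by norm_num)]
    nlinarith
  unfold fγ
  nlinarith

private lemma fγ_b : 0 < fγ 0.5557 := by
  have h1 : (2.0757 : ℝ) < Real.sqrt ((0.5557 : ℝ) ^ 2 + 4) := by
    rw [Real.lt_sqrt (by norm_num)]; norm_num
  have h2 : Real.sqrt (1 - 0.5557 * ((0.5557 + Real.sqrt ((0.5557 : ℝ) ^ 2 + 4)) / 2)) <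
      ((1 : ℝ) + 0.5557) / 3 := by
    rw [Real.sqrt_lt' (by norm_num)]
    nlinarith
  unfold fγ
  nlinarith

/-- The inequality `3 M∞(γ) < 2 − γ`, with `M∞(γ) = 1 − √(1 − γ(γ+√(γ²+4))/2)`,
holds for all `0 ≤ γ < γ*`, where `γ* ∈ (0.5556, 0.5557)` is the unique positive
solution of `3 M∞(γ) = 2 − γ`; in particular it holds for all `0 ≤ γ ≤ 0.5556`. -/
theorem basin_inclusion_bound :
    let M : ℝ → ℝ :=
      fun γ => 1 - Real.sqrt (1 - γ * ((γ + Real.sqrt (γ ^ 2 + 4)) / 2))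
    ∃ γstar : ℝ, γstar ∈ Set.Ioo (0.5556 : ℝ) 0.5557 ∧
      (∀ γ : ℝ, 0 < γ → (3 * M γ = 2 - γ ↔ γ = γstar)) ∧
      (∀ γ : ℝ, 0 ≤ γ → γ < γstar → 3 * M γ < 2 - γ) ∧
      (∀ γ : ℝ, 0 ≤ γ → γ ≤ 0.5556 → 3 * M γ < 2 - γ) := by
  intro M
  have hM : ∀ γ : ℝ, 3 * M γ - (2 - γ) = fγ γ := fun γ => rfl
  obtain ⟨γstar, hmem, hval⟩ :
      ∃ c ∈ Set.Ioo (0.5556 : ℝ) 0.5557, fγ c = 0 := by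
    have h := intermediate_value_Ioo (by norm_num : (0.5556 : ℝ) ≤ 0.5557)
      fγ_cont.continuousOn
    have h0 : (0 : ℝ) ∈ Set.Ioo (fγ 0.5556) (fγ 0.5557) := ⟨fγ_a, fγ_b⟩
    obtain ⟨c, hc, hc0⟩ := h h0
    exact ⟨c, hc, hc0⟩
  have hstar0 : (0 : ℝ) ≤ γstar := by linarith [hmem.1]
  refine ⟨γstar, hmem, ?_, ?_, ?_⟩
  · intro γ hγ
    constructor
    · intro h
      have hfγ : fγ γ = 0 := by rw [← hM]; linarith
      exact fγ_strictMono.injOn (Set.mem_Ici.2 hγ.le) (Set.mem_Ici.2 hstar0)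
        (by rw [hfγ, hval])
    · rintro rfl
      have := hval
      rw [← hM] at this
      linarith
  · intro γ hγ0 hγ
    have := fγ_strictMono (Set.mem_Ici.2 hγ0) (Set.mem_Ici.2 hstar0) hγ
    rw [hval] at this
    linarith [hM γ, this]
  · intro γ hγ0 hγ
    have hlt : γ < γstar := lt_of_le_of_lt hγ hmem.1
    have := fγ_strictMono (Set.mem_Ici.2 hγ0) (Set.mem_Ici.2 hstar0) hlt
    rw [hval] at this
    linarith [hM γ, this]
end

section
/- Let s : ℤ → {±1}, and suppose z, w ∈ ℓ∞(ℤ) satisfy ‖z − s‖∞ ≤ M and ‖w − s‖∞ ≤ M with the radicands 1 + ε(z_{t+1} + b z_{t−1}) ≥ α² > 0 and similarly for w. Then ‖T(z) − T(w)‖∞ ≤ (γ/(2α))·‖z − w‖∞, where γ = |ε|(1+|b|) and T(z)_t = s_t√(1 + ε(z_{t+1} + b z_{t−1})). In particular T is a contraction when γ < 2α. -/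
lemma sqrt_lip (α a c : ℝ) (hα : 0 < α) (ha : α ^ 2 ≤ a) (hc : α ^ 2 ≤ c) :
    |Real.sqrt a - Real.sqrt c| ≤ |a - c| / (2 * α) := by
  have ha0 : (0:ℝ) ≤ a := le_trans (by positivity) ha
  have hc0 : (0:ℝ) ≤ c := le_trans (by positivity) hc
  have hsa : α ≤ Real.sqrt a := by
    rw [show α = Real.sqrt (α ^ 2) by rw [Real.sqrt_sq hα.le]]
    exact Real.sqrt_le_sqrt ha
  have hsc : α ≤ Real.sqrt c := by
    rw [show α = Real.sqrt (α ^ 2) by rw [Real.sqrt_sq hα.le]]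
    exact Real.sqrt_le_sqrt hc
  have key : |Real.sqrt a - Real.sqrt c| * (Real.sqrt a + Real.sqrt c) = |a - c| := by
    rw [← abs_of_nonneg (show (0:ℝ) ≤ Real.sqrt a + Real.sqrt c by positivity), ← abs_mul]
    congr 1
    have := Real.sq_sqrt ha0
    have := Real.sq_sqrt hc0
    ring_nf
    nlinarith [Real.sq_sqrt ha0, Real.sq_sqrt hc0]
  rw [div_eq_inv_mul, ← key]
  have h2 : 2 * α ≤ Real.sqrt a + Real.sqrt c := by linarith
  have habs : (0:ℝ) ≤ |Real.sqrt a - Real.sqrt c| := abs_nonneg _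
  calc |Real.sqrt a - Real.sqrt c|
      = (2*α)⁻¹ * (|Real.sqrt a - Real.sqrt c| * (2*α)) := by field_simp
    _ ≤ (2*α)⁻¹ * (|Real.sqrt a - Real.sqrt c| * (Real.sqrt a + Real.sqrt c)) := by
        apply mul_le_mul_of_nonneg_left _ (by positivity)
        exact mul_le_mul_of_nonneg_left h2 habs

/-- Lipschitz estimate for the anti-integrable operator: if `z, w` lie in the ball
`B_M(s)` and all radicands are at least `α² > 0`, then for any uniform bound `C`
on `|z_t − w_t|` one has `|T(z)_t − T(w)_t| ≤ (γ/(2α)) C` with `γ = |ε|(1+|b|)`;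
in particular `T` is a contraction when `γ < 2α`. -/
theorem AI_operator_lipschitz (s : ℤ → ℝ) (hs : ∀ t, s t = 1 ∨ s t = -1)
    (ε b M α : ℝ) (hα : 0 < α) (z w : ℤ → ℝ)
    (hz : ∀ t, |z t - s t| ≤ M) (hw : ∀ t, |w t - s t| ≤ M)
    (hrz : ∀ t : ℤ, α ^ 2 ≤ 1 + ε * (z (t + 1) + b * z (t - 1)))
    (hrw : ∀ t : ℤ, α ^ 2 ≤ 1 + ε * (w (t + 1) + b * w (t - 1)))
    (C : ℝ) (hC : ∀ t, |z t - w t| ≤ C) :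
    ∀ t : ℤ,
      |s t * Real.sqrt (1 + ε * (z (t + 1) + b * z (t - 1))) -
        s t * Real.sqrt (1 + ε * (w (t + 1) + b * w (t - 1)))| ≤
      (|ε| * (1 + |b|) / (2 * α)) * C := by
  intro t
  have hst : |s t| = 1 := by rcases hs t with h | h <;> simp [h]
  rw [← mul_sub, abs_mul, hst, one_mul]
  have h1 := sqrt_lip α _ _ hα (hrz t) (hrw t)
  have hC0 : 0 ≤ C := le_trans (abs_nonneg _) (hC 0)
  have h2 : |(1 + ε * (z (t + 1) + b * z (t - 1))) - (1 + ε * (w (t + 1) + b * w (t - 1)))|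
      ≤ |ε| * (1 + |b|) * C := by
    have e : (1 + ε * (z (t + 1) + b * z (t - 1))) - (1 + ε * (w (t + 1) + b * w (t - 1)))
        = ε * ((z (t+1) - w (t+1)) + b * (z (t-1) - w (t-1))) := by ring
    rw [e, abs_mul]
    have : |(z (t+1) - w (t+1)) + b * (z (t-1) - w (t-1))| ≤ (1 + |b|) * C := by
      calc _ ≤ |z (t+1) - w (t+1)| + |b * (z (t-1) - w (t-1))| := abs_add_le _ _
        _ ≤ C + |b| * C := by
            rw [abs_mul]
            exact add_le_add (hC _) (mul_le_mul_of_nonneg_left (hC _) (abs_nonneg _))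
        _ = (1 + |b|) * C := by ring
    calc |ε| * _ ≤ |ε| * ((1 + |b|) * C) :=
          mul_le_mul_of_nonneg_left this (abs_nonneg _)
      _ = |ε| * (1 + |b|) * C := by ring
  calc _ ≤ |(1 + ε * (z (t + 1) + b * z (t - 1))) - (1 + ε * (w (t + 1) + b * w (t - 1)))| / (2 * α) := h1
    _ ≤ (|ε| * (1 + |b|) * C) / (2 * α) := by
        apply div_le_div_of_nonneg_right h2 (by positivity) |>.trans_eq rfl
    _ = (|ε| * (1 + |b|) / (2 * α)) * C := by ring
end
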